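/- Let 0 < α < 1, let u ∈ L¹([a,b],ℝⁿ), and let x : [a,b] → ℝⁿ be a continuous function such that x(t) = x(a) + ∫_a^t ((t−s)^{α−1}/Γ(α)) u(s) ds for almost every t ∈ [a,b] (so u is the Caputo fractional derivative of order α of x). Suppose there exist real numbers a ≤ c < d ≤ b such that x(t) = 0 for all t ∈ [c,d] and u(t) = 0 for almost every t ∈ [c,d]. Then x(t) = 0 for all t ∈ [a,d]. -/

import Mathlib

open MeasureTheory Set Filter Topology intervalIntegral
section AuxLemmas
variable {E : Type*} [NormedAddCommGroup E] [NormedSpace ℝ E]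



/-- A set of full measure in `Ioo p q` has `Icc p q` inside its closure. -/
lemma aux_subset_closure {p q : ℝ} (hpq : p < q) {S : Set ℝ}
    (hS : volume (Ioo p q \ S) = 0) : Icc p q ⊆ closure S := by
  have h1 : Ioo p q ⊆ closure S := by
    intro t ht
    rw [mem_closure_iff]
    intro U hU htU
    by_contra hne
    have hsub : U ∩ Ioo p q ⊆ Ioo p q \ S := by
      intro y hy
      refine ⟨hy.2, fun hyS => hne ⟨y, hy.1, hyS⟩⟩
    have hpos : 0 < volume (U ∩ Ioo p q) :=
      (hU.inter isOpen_Ioo).measure_pos volume ⟨t, htU, ht⟩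
    exact absurd (le_trans (measure_mono hsub) hS.le) (not_le.mpr hpos)
  calc Icc p q = closure (Ioo p q) := (closure_Ioo hpq.ne).symm
    _ ⊆ closure (closure S) := closure_mono h1
    _ = closure S := closure_closure

/-- If `g` vanishes a.e. on `Ioo p q` and is continuous within `Icc p q`,
then it vanishes on all of `Icc p q`. -/
lemma aux_zero_of_ae {p q : ℝ} (hpq : p < q) {g : ℝ → E}
    (hg : ∀ t ∈ Icc p q, ContinuousWithinAt g (Icc p q) t)
    (h : ∀ᵐ t ∂(volume.restrict (Ioo p q)), g t = 0) :
    ∀ t ∈ Icc p q, g t = 0 := by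
  set S : Set ℝ := {t | t ∈ Ioo p q ∧ g t = 0} with hSdef
  have hnull : volume (Ioo p q \ S) = 0 := by
    rw [ae_iff, Measure.restrict_apply' measurableSet_Ioo] at h
    refine measure_mono_null ?_ h
    intro y hy
    exact ⟨fun hgy => hy.2 ⟨hy.1, hgy⟩, hy.1⟩
  have hcl : Icc p q ⊆ closure S := aux_subset_closure hpq hnull
  intro t ht
  have hne : (𝓝[S] t).NeBot := mem_closure_iff_nhdsWithin_neBot.mp (hcl ht)
  have hmono : 𝓝[S] t ≤ 𝓝[Icc p q] t :=
    nhdsWithin_mono t (fun y hy => Ioo_subset_Icc_self hy.1)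
  have h1 : Tendsto g (𝓝[S] t) (𝓝 (g t)) := (hg t ht).tendsto.mono_left hmono
  have h2 : Tendsto g (𝓝[S] t) (𝓝 0) := by
    refine Tendsto.congr' ?_ tendsto_const_nhds
    filter_upwards [eventually_mem_nhdsWithin] with y hy using hy.2.symm
  exact tendsto_nhds_unique h1 h2

/-- Integrability of a singular-kernel multiple of an integrable function,
when the singularity is outside the interval. -/
lemma aux_kernel_int {u : ℝ → E} {p q t β : ℝ} (hqt : q < t) (hβ : β ≤ 0)
    (hu : IntegrableOn u (Ioc p q)) :
    IntegrableOn (fun s => (t - s) ^ β • u s) (Ioc p q) := by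
  have hmeas : AEStronglyMeasurable (fun s => (t - s) ^ β • u s)
      (volume.restrict (Ioc p q)) := by
    have hc : ContinuousOn (fun s : ℝ => (t - s) ^ β) (Ioc p q) := by
      intro s hs
      have : ContinuousAt (fun s : ℝ => (t - s) ^ β) s := by
        have h1 : ContinuousAt (fun s : ℝ => t - s) s :=
          (continuous_const.sub continuous_id).continuousAt
        exact (Real.continuousAt_rpow_const _ _ (Or.inl (by linarith [hs.2]))).comp h1
      exact this.continuousWithinAt
    exact (hc.aestronglyMeasurable measurableSet_Ioc).smul hu.aestronglyMeasurable
  refine Integrable.mono' (hu.norm.const_mul ((t - q) ^ β)) hmeas ?_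
  filter_upwards [ae_restrict_mem measurableSet_Ioc] with s hs
  have h1 : 0 < t - q := by linarith
  have h2 : t - q ≤ t - s := by linarith [hs.2]
  rw [norm_smul, Real.norm_eq_abs, abs_of_nonneg (Real.rpow_nonneg (by linarith) _)]
  exact mul_le_mul_of_nonneg_right (Real.rpow_le_rpow_of_nonpos h1 h2 hβ) (norm_nonneg _)



lemma aux_meas {u : ℝ → E} {p q : ℝ} (hu : IntegrableOn u (Ioc p q)) (t β : ℝ)
    (hqt : q < t) :
    AEStronglyMeasurable (fun s => (t - s) ^ β • u s) (volume.restrict (Ioc p q)) := by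
  have hc : ContinuousOn (fun s : ℝ => (t - s) ^ β) (Ioc p q) := by
    intro s hs
    have h1 : ContinuousAt (fun s : ℝ => t - s) s :=
      (continuous_const.sub continuous_id).continuousAt
    exact ((Real.continuousAt_rpow_const _ _ (Or.inl (by linarith [hs.2]))).comp
      h1).continuousWithinAt
  exact (hc.aestronglyMeasurable measurableSet_Ioc).smul hu.aestronglyMeasurable

lemma aux_hasDerivAt [CompleteSpace E] {u : ℝ → E} {a c : ℝ} (hac : a < c)
    (hu : IntegrableOn u (Ioc a c)) {β : ℝ} (hβ : β ≤ 0) {t0 : ℝ} (ht0 : c < t0) :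
    HasDerivAt (fun t => ∫ s in a..c, (t - s) ^ β • u s)
      (β • ∫ s in a..c, (t0 - s) ^ (β - 1) • u s) t0 := by
  have huIoc : Set.uIoc a c = Ioc a c := uIoc_of_le hac.le
  set m : ℝ := (t0 - c) / 2 with hm
  have hmpos : 0 < m := by simp only [hm]; linarith
  have key := intervalIntegral.hasDerivAt_integral_of_dominated_loc_of_deriv_le
    (F := fun t s => (t - s) ^ β • u s)
    (F' := fun t s => (β * (t - s) ^ (β - 1)) • u s)
    (bound := fun s => |β| * m ^ (β - 1) * ‖u s‖)
    (μ := volume) (a := a) (b := c) (x₀ := t0) (s := Metric.ball t0 m) (Metric.ball_mem_nhds t0 hmpos)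
    ?_ ?_ ?_ ?_ ?_ ?_
  · have h2 := key.2
    have : (∫ s in a..c, (β * (t0 - s) ^ (β - 1)) • u s)
        = β • ∫ s in a..c, (t0 - s) ^ (β - 1) • u s := by
      rw [← intervalIntegral.integral_smul]
      congr 1
      funext s
      rw [mul_smul]
    rwa [this] at h2
  · -- hF_meas
    filter_upwards [isOpen_Ioi.mem_nhds (show t0 ∈ Ioi c from ht0)] with t ht
    rw [huIoc]
    exact aux_meas hu t β ht
  · -- hF_int
    rw [intervalIntegrable_iff, huIoc]
    exact aux_kernel_int ht0 hβ hu
  · -- hF'_meas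
    rw [huIoc]
    have := (aux_meas hu t0 (β - 1) ht0).const_smul β
    refine this.congr ?_
    filter_upwards with s
    simp [mul_smul]
  · -- h_bound
    refine Eventually.of_forall fun s hs => fun t ht => ?_
    rw [huIoc] at hs
    have hts : m ≤ t - s := by
      have h1 : |t - t0| < m := by simpa [Metric.mem_ball, Real.dist_eq] using ht
      have h2 := abs_lt.mp h1
      have := hs.2
      simp only [hm] at *
      linarith
    rw [norm_smul, Real.norm_eq_abs, abs_mul,
      abs_of_nonneg (Real.rpow_nonneg (by linarith) _)]
    have hle : (t - s) ^ (β - 1) ≤ m ^ (β - 1) :=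
      Real.rpow_le_rpow_of_nonpos hmpos hts (by linarith)
    have h0 : (0:ℝ) ≤ |β| := abs_nonneg _
    calc |β| * (t - s) ^ (β - 1) * ‖u s‖
        ≤ |β| * m ^ (β - 1) * ‖u s‖ := by
          apply mul_le_mul_of_nonneg_right _ (norm_nonneg _)
          exact mul_le_mul_of_nonneg_left hle h0
      _ = |β| * m ^ (β - 1) * ‖u s‖ := rfl
  · -- bound integrable
    rw [intervalIntegrable_iff, huIoc]
    exact (hu.norm.const_mul _)
  · -- h_diff
    refine Eventually.of_forall fun s hs => fun t ht => ?_
    rw [huIoc] at hs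
    have hts : 0 < t - s := by
      have h1 : |t - t0| < m := by simpa [Metric.mem_ball, Real.dist_eq] using ht
      have h2 := abs_lt.mp h1
      have := hs.2
      simp only [hm] at *
      linarith
    have hd : HasDerivAt (fun t : ℝ => (t - s) ^ β) (1 * β * (t - s) ^ (β - 1)) t :=
      ((hasDerivAt_id t).sub_const s).rpow_const (Or.inl hts.ne')
    have hd2 := hd.smul_const (u s)
    have : (1 * β * (t - s) ^ (β - 1)) • u s = (β * (t - s) ^ (β - 1)) • u s := by
      rw [one_mul]
    rwa [this] at hd2
lemma aux_cont_smul_int {w : ℝ → E} {a c : ℝ} (hw : IntegrableOn w (Ioc a c))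
    {h : ℝ → ℝ} (hh : ContinuousOn h (Icc a c)) :
    IntegrableOn (fun s => h s • w s) (Ioc a c) := by
  obtain ⟨C, hC⟩ := isCompact_Icc.exists_bound_of_continuousOn hh
  refine Integrable.mono' (hw.norm.const_mul C)
    (((hh.mono Ioc_subset_Icc_self).aestronglyMeasurable measurableSet_Ioc).smul
      hw.aestronglyMeasurable) ?_
  filter_upwards [ae_restrict_mem measurableSet_Ioc] with s hs
  rw [norm_smul]
  exact mul_le_mul_of_nonneg_right (hC s (Ioc_subset_Icc_self hs)) (norm_nonneg _)

lemma aux_moments_zero [CompleteSpace E] {w : ℝ → E} {a c t0 : ℝ} (hac : a < c)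
    (hct0 : c < t0) (hw : IntegrableOn w (Ioc a c))
    (hmom : ∀ m : ℕ, ∫ s in Ioc a c, ((t0 - s)⁻¹) ^ m • w s = 0) :
    ∀ᵐ s ∂(volume.restrict (Ioc a c)), w s = 0 := by
  have hinv_cont : ContinuousOn (fun s : ℝ => (t0 - s)⁻¹) (Icc a c) := by
    refine (continuous_const.sub continuous_id).continuousOn.inv₀ fun s hs => ?_
    have := hs.2; intro h0; simp at h0; linarith
  -- vanishing against polynomials in (t0 - s)⁻¹
  have hmom_int : ∀ m : ℕ, IntegrableOn (fun s => ((t0 - s)⁻¹) ^ m • w s) (Ioc a c) :=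
    fun m => aux_cont_smul_int hw (hinv_cont.pow m)
  have hpoly : ∀ p : Polynomial ℝ,
      ∫ s in Ioc a c, (p.eval ((t0 - s)⁻¹)) • w s = 0 := by
    intro p
    have hrw : ∀ s : ℝ, (p.eval ((t0 - s)⁻¹)) • w s
        = ∑ i ∈ Finset.range (p.natDegree + 1),
            p.coeff i • (((t0 - s)⁻¹) ^ i • w s) := by
      intro s
      rw [Polynomial.eval_eq_sum_range, Finset.sum_smul]
      congr 1; funext i; rw [mul_smul]
    simp_rw [hrw]
    rw [MeasureTheory.integral_finset_sum]
    · refine Finset.sum_eq_zero fun i _ => ?_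
      rw [MeasureTheory.integral_smul, hmom i, smul_zero]
    · exact fun i _ => ((hmom_int i).smul _)
  -- vanishing against all continuous functions
  have htest : ∀ h : ℝ → ℝ, Continuous h → ∫ s in Ioc a c, h s • w s = 0 := by
    intro h hh
    set I := ∫ s in Ioc a c, h s • w s with hI
    set M := ∫ s in Ioc a c, ‖w s‖ with hM
    have hM0 : 0 ≤ M := integral_nonneg fun s => norm_nonneg _
    have hbound : ∀ ε > (0:ℝ), ‖I‖ ≤ ε := by
      intro ε hε
      set δ := ε / (M + 1) with hδ
      have hδ0 : 0 < δ := by apply div_pos hε; linarith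
      haveI : CompactSpace (Icc a c) := isCompact_iff_compactSpace.mp isCompact_Icc
      set φc : C(Icc a c, ℝ) :=
        ⟨fun s => (t0 - (s : ℝ))⁻¹, hinv_cont.restrict⟩ with hφc
      have sep : (Algebra.adjoin ℝ ({φc} : Set C(Icc a c, ℝ))).SeparatesPoints := by
        intro s1 s2 hne
        refine ⟨_, ⟨φc, Algebra.subset_adjoin (mem_singleton _), rfl⟩, ?_⟩
        intro heq
        apply hne
        have h1 : t0 - (s1 : ℝ) = t0 - (s2 : ℝ) := inv_injective heq
        ext
        linarith
      set hc : C(Icc a c, ℝ) := ⟨fun s => h s, hh.comp continuous_subtype_val⟩ with hhc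
      obtain ⟨g, hg⟩ := ContinuousMap.exists_mem_subalgebra_near_continuousMap_of_separatesPoints
        (Algebra.adjoin ℝ ({φc} : Set C(Icc a c, ℝ))) sep hc δ hδ0
      obtain ⟨p, hp⟩ : ∃ p : Polynomial ℝ, Polynomial.aeval φc p = (g : C(Icc a c, ℝ)) := by
        exact (AlgHom.mem_range _).mp
          (by rw [← Algebra.adjoin_singleton_eq_range_aeval]; exact g.2)
      set ψ : ℝ → ℝ := fun s => p.eval ((t0 - s)⁻¹) with hψ
      have hψg : ∀ s : Icc a c, ψ (s : ℝ) = (g : C(Icc a c, ℝ)) s := by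
        intro s
        rw [← hp, Polynomial.aeval_continuousMap_apply]
        rfl
      have hψ_cont : ContinuousOn ψ (Icc a c) := p.continuous.comp_continuousOn hinv_cont
      have hint1 : IntegrableOn (fun s => (h s - ψ s) • w s) (Ioc a c) :=
        aux_cont_smul_int hw (hh.continuousOn.sub hψ_cont)
      have hint2 : IntegrableOn (fun s => ψ s • w s) (Ioc a c) :=
        aux_cont_smul_int hw hψ_cont
      have hsplit : I = (∫ s in Ioc a c, (h s - ψ s) • w s) + ∫ s in Ioc a c, ψ s • w s := by
        rw [hI, ← integral_add hint1 hint2]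
        congr 1; funext s; rw [← add_smul, sub_add_cancel]
      have hψ0 : ∫ s in Ioc a c, ψ s • w s = 0 := hpoly p
      have hnorm : ‖∫ s in Ioc a c, (h s - ψ s) • w s‖ ≤ δ * M := by
        have hb : ∀ᵐ s ∂(volume.restrict (Ioc a c)), ‖(h s - ψ s) • w s‖ ≤ δ * ‖w s‖ := by
          filter_upwards [ae_restrict_mem measurableSet_Ioc] with s hs
          have hs' : s ∈ Icc a c := Ioc_subset_Icc_self hs
          rw [norm_smul]
          refine mul_le_mul_of_nonneg_right ?_ (norm_nonneg _)
          have h1 : h s - ψ s = (hc - (g : C(Icc a c, ℝ))) ⟨s, hs'⟩ := by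
            simp [hhc, hψg ⟨s, hs'⟩]
          rw [Real.norm_eq_abs, h1]
          calc |(hc - (g : C(Icc a c, ℝ))) ⟨s, hs'⟩|
              ≤ ‖hc - (g : C(Icc a c, ℝ))‖ := (hc - _).norm_coe_le_norm _
            _ = ‖(g : C(Icc a c, ℝ)) - hc‖ := norm_sub_rev _ _
            _ ≤ δ := hg.le
        calc ‖∫ s in Ioc a c, (h s - ψ s) • w s‖
            ≤ ∫ s in Ioc a c, δ * ‖w s‖ :=
              norm_integral_le_of_norm_le (hw.norm.const_mul δ) hb
          _ = δ * M := by rw [MeasureTheory.integral_const_mul]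
      rw [hsplit, hψ0, add_zero]
      calc ‖∫ s in Ioc a c, (h s - ψ s) • w s‖ ≤ δ * M := hnorm
        _ ≤ ε := by
            rw [hδ, div_mul_eq_mul_div, div_le_iff₀ (by linarith)]
            nlinarith
    have hI0 : ‖I‖ ≤ 0 := by
      by_contra hcon
      push_neg at hcon
      exact absurd (hbound (‖I‖ / 2) (by linarith)) (by linarith)
    exact norm_le_zero_iff.mp hI0
  exact ae_eq_zero_of_integral_contDiff_smul_eq_zero hw.locallyIntegrable
    fun g hg1 hg2 => htest g hg1.continuous

end AuxLemmas

theorem stmt_9 (n : ℕ) (hn : 1 ≤ n) (a b : ℝ) (hab : a < b)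
    (α : ℝ) (hα0 : 0 < α) (hα1 : α < 1)
    (u : ℝ → EuclideanSpace ℝ (Fin n)) (hu : IntegrableOn u (Icc a b))
    (x : ℝ → EuclideanSpace ℝ (Fin n)) (hx : ContinuousOn x (Icc a b))
    (hxu : ∀ᵐ t ∂(volume.restrict (Icc a b)),
      x t = x a + ∫ s in a..t, ((t - s) ^ (α - 1) / Real.Gamma α) • u s)
    (c d : ℝ) (hac : a ≤ c) (hcd : c < d) (hdb : d ≤ b)
    (hx0 : ∀ t ∈ Icc c d, x t = 0)
    (hu0 : ∀ᵐ t ∂(volume.restrict (Icc c d)), u t = 0) :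
    ∀ t ∈ Icc a d, x t = 0 := by
  rcases eq_or_lt_of_le hac with rfl | hac'
  · exact fun t ht => hx0 t ht
  have hΓpos : 0 < Real.Gamma α := Real.Gamma_pos_of_pos hα0
  have hu' : IntegrableOn u (Ioc a c) :=
    hu.mono_set (subset_trans Ioc_subset_Icc_self (Icc_subset_Icc le_rfl (by linarith)))
  set F : ℝ → ℝ → EuclideanSpace ℝ (Fin n) :=
    fun β t => ∫ s in a..c, (t - s) ^ β • u s with hF
  have hu0' : ∀ᵐ s ∂(volume.restrict (Ioc c d)), u s = 0 :=
    ae_restrict_of_ae_restrict_of_subset Ioc_subset_Icc_self hu0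
  -- Step A: the tail integral is a.e. constant on (c,d)
  have hae : ∀ᵐ t ∂(volume.restrict (Ioo c d)),
      F (α - 1) t + Real.Gamma α • x a = 0 := by
    have hsub : Ioo c d ⊆ Icc a b := fun y hy =>
      ⟨by linarith [hy.1], by linarith [hy.2]⟩
    filter_upwards [ae_restrict_of_ae_restrict_of_subset hsub hxu,
      ae_restrict_mem measurableSet_Ioo] with t hteq ht
    have hxt0 : x t = 0 := hx0 t ⟨ht.1.le, ht.2.le⟩
    have hint1 : IntervalIntegrable (fun s => (t - s) ^ (α - 1) • u s) volume a c := by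
      rw [intervalIntegrable_iff, uIoc_of_le hac'.le]
      exact aux_kernel_int ht.1 (by linarith) hu'
    have hzero2 : (fun s => (t - s) ^ (α - 1) • u s)
        =ᵐ[volume.restrict (Ioc c t)] 0 := by
      filter_upwards [ae_restrict_of_ae_restrict_of_subset
        (Ioc_subset_Ioc_right ht.2.le) hu0'] with s hs
      rw [hs, smul_zero]; rfl
    have hint2 : IntervalIntegrable (fun s => (t - s) ^ (α - 1) • u s) volume c t := by
      rw [intervalIntegrable_iff, uIoc_of_le ht.1.le]
      exact (integrable_zero _ _ _).congr hzero2.symm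
    have hsplit := intervalIntegral.integral_add_adjacent_intervals hint1 hint2
    have h2z : ∫ s in c..t, (t - s) ^ (α - 1) • u s = 0 := by
      rw [intervalIntegral.integral_of_le ht.1.le]
      exact integral_eq_zero_of_ae hzero2
    have hker : ∀ s : ℝ, ((t - s) ^ (α - 1) / Real.Gamma α) • u s
        = (Real.Gamma α)⁻¹ • ((t - s) ^ (α - 1) • u s) := by
      intro s
      rw [smul_smul, div_eq_mul_inv, mul_comm]
    have hcalc : (∫ s in a..t, ((t - s) ^ (α - 1) / Real.Gamma α) • u s)
        = (Real.Gamma α)⁻¹ • F (α - 1) t := by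
      calc (∫ s in a..t, ((t - s) ^ (α - 1) / Real.Gamma α) • u s)
          = ∫ s in a..t, (Real.Gamma α)⁻¹ • ((t - s) ^ (α - 1) • u s) := by
            simp_rw [hker]
        _ = (Real.Gamma α)⁻¹ • ∫ s in a..t, (t - s) ^ (α - 1) • u s :=
            intervalIntegral.integral_smul _ _
        _ = (Real.Gamma α)⁻¹ • F (α - 1) t := by
            rw [← hsplit, h2z, add_zero]
    rw [hxt0, hcalc] at hteq
    have h7 : Real.Gamma α • (0 : EuclideanSpace ℝ (Fin n))
        = Real.Gamma α • (x a + (Real.Gamma α)⁻¹ • F (α - 1) t) := congrArg _ hteq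
    rw [smul_zero, smul_add, smul_smul, mul_inv_cancel₀ hΓpos.ne', one_smul] at h7
    rw [add_comm]
    exact h7.symm
  -- Step B: the tail integral is everywhere constant on (c,d)
  have hF0 : ∀ t ∈ Ioo c d, F (α - 1) t = -(Real.Gamma α • x a) := by
    intro t ht
    set p := (c + t) / 2 with hp
    set q := (t + d) / 2 with hq
    have hpq : p < q := by simp only [hp, hq]; linarith [ht.1, ht.2]
    have hzero := aux_zero_of_ae hpq
      (g := fun t => F (α - 1) t + Real.Gamma α • x a)
      (fun y hy => by
        have hcy : c < y := by
          simp only [hp, hq] at hy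
          have := hy.1; have := ht.1; linarith [ht.2]
        exact (((aux_hasDerivAt hac' hu' (by linarith : α - 1 ≤ 0)
          hcy).continuousAt).add continuousAt_const).continuousWithinAt)
      (ae_restrict_of_ae_restrict_of_subset
        (fun y hy => by
          constructor
          · simp only [hp] at hy ⊢; linarith [hy.1, ht.1]
          · simp only [hq] at hy ⊢; linarith [hy.2, ht.2]) hae)
    have := hzero t ⟨by simp only [hp]; linarith [ht.1], by simp only [hq]; linarith [ht.2]⟩
    linear_combination (norm := module) this
  -- Step C: bootstrap
  have hstep : ∀ β : ℝ, β ≤ 0 → β ≠ 0 → ∀ K : EuclideanSpace ℝ (Fin n),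
      (∀ t ∈ Ioo c d, F β t = K) → ∀ t ∈ Ioo c d, F (β - 1) t = 0 := by
    intro β hβ hβne K hK t ht
    have h1 : HasDerivAt (fun t => F β t) (β • F (β - 1) t) t :=
      aux_hasDerivAt hac' hu' hβ ht.1
    have h2 : HasDerivAt (fun t => F β t) 0 t := by
      have hev : (fun t => F β t) =ᶠ[nhds t] fun _ => K := by
        filter_upwards [isOpen_Ioo.mem_nhds ht] with y hy using hK y hy
      exact (hasDerivAt_const t K).congr_of_eventuallyEq hev
    exact (smul_eq_zero.mp (h1.unique h2)).resolve_left hβne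
  -- Step D: all higher "moments" vanish on (c,d)
  have key : ∀ k : ℕ, ∀ t ∈ Ioo c d, F (α - 2 - k) t = 0 := by
    intro k
    induction k with
    | zero =>
      intro t ht
      have := hstep (α - 1) (by linarith) (sub_ne_zero.mpr hα1.ne) _ hF0 t ht
      convert this using 2
      push_cast; ring
    | succ m ih =>
      intro t ht
      have hne : α - 2 - (m : ℝ) ≠ 0 := by
        have : (0:ℝ) ≤ m := Nat.cast_nonneg m
        intro h0; nlinarith
      have := hstep (α - 2 - m) (by have : (0:ℝ) ≤ m := Nat.cast_nonneg m; linarith)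
        hne 0 ih t ht
      convert this using 2
      push_cast; ring
  set t0 := (c + d) / 2 with ht0def
  have ht0 : t0 ∈ Ioo c d := ⟨by simp only [ht0def]; linarith, by simp only [ht0def]; linarith⟩
  have hct0 : c < t0 := ht0.1
  -- Step E: u vanishes a.e. on (a,c]
  set w : ℝ → EuclideanSpace ℝ (Fin n) := fun s => (t0 - s) ^ (α - 2) • u s with hwdef
  have hw : IntegrableOn w (Ioc a c) := aux_kernel_int hct0 (by linarith) hu'
  have hmom : ∀ m : ℕ, ∫ s in Ioc a c, ((t0 - s)⁻¹) ^ m • w s = 0 := by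
    intro m
    have hk : F (α - 2 - m) t0 = 0 := key m t0 ht0
    simp only [hF] at hk
    rw [intervalIntegral.integral_of_le hac'.le] at hk
    rw [← hk]
    refine setIntegral_congr_fun measurableSet_Ioc fun s hs => ?_
    have hpos : 0 < t0 - s := by linarith [hs.2]
    simp only [hwdef, smul_smul]
    congr 1
    rw [inv_pow, ← Real.rpow_natCast (t0 - s) m, ← Real.rpow_neg hpos.le,
      ← Real.rpow_add hpos]
    congr 1
    ring
  have hwz := aux_moments_zero hac' hct0 hw hmom
  have huz : ∀ᵐ s ∂(volume.restrict (Ioc a c)), u s = 0 := by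
    filter_upwards [hwz, ae_restrict_mem measurableSet_Ioc] with s h1 h2
    have hpos : 0 < t0 - s := by linarith [h2.2]
    have hne : (t0 - s) ^ (α - 2 : ℝ) ≠ 0 := (Real.rpow_pos_of_pos hpos _).ne'
    simpa [hwdef, smul_eq_zero, hne] using h1
  -- Step F: x a = 0
  have hFz : F (α - 1) t0 = 0 := by
    simp only [hF]
    rw [intervalIntegral.integral_of_le hac'.le]
    refine integral_eq_zero_of_ae ?_
    filter_upwards [huz] with s hs
    rw [hs, smul_zero]; rfl
  have hxa : x a = 0 := by
    have h6 := hF0 t0 ht0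
    rw [hFz, eq_comm, neg_eq_zero] at h6
    exact (smul_eq_zero.mp h6).resolve_left hΓpos.ne'
  -- Step G: x vanishes on [a,c]
  have hxac : ∀ t ∈ Icc a c, x t = 0 := by
    refine aux_zero_of_ae hac'
      (fun t ht => (hx.mono (Icc_subset_Icc le_rfl (by linarith))) t ht) ?_
    have hsub : Ioo a c ⊆ Icc a b := fun y hy =>
      ⟨hy.1.le, by linarith [hy.2]⟩
    filter_upwards [ae_restrict_of_ae_restrict_of_subset hsub hxu,
      ae_restrict_mem measurableSet_Ioo] with t hteq ht
    have hz : (fun s => ((t - s) ^ (α - 1) / Real.Gamma α) • u s)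
        =ᵐ[volume.restrict (Ioc a t)] 0 := by
      filter_upwards [ae_restrict_of_ae_restrict_of_subset
        (Ioc_subset_Ioc_right ht.2.le) huz] with s hs
      rw [hs, smul_zero]; rfl
    rw [hteq, hxa, intervalIntegral.integral_of_le ht.1.le,
      integral_eq_zero_of_ae hz, zero_add]
  intro t ht
  rcases le_or_gt t c with h | h
  · exact hxac t ⟨ht.1, h⟩
  · exact hx0 t ⟨h.le, ht.2⟩
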